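/- Let p be a prime and n a positive integer dividing p^t + 1 for some positive integer t, with n coprime to p. Then every irreducible factor of X^n - 1 over F_p other than X - 1 and X + 1 has even degree. -/

import Mathlib

open Polynomial

set_option maxHeartbeats 1000000 in
theorem stmt_2 (p t n : ℕ) (hp : p.Prime) (ht : 0 < t) (hn : 0 < n)
    (hdvd : n ∣ p ^ t + 1) (f : Polynomial (ZMod p)) (hf : Irreducible f)
    (hfdvd : f ∣ X ^ n - 1)
    (h1 : ¬ Associated f (X - 1)) (h2 : ¬ Associated f (X + 1)) :
    Even f.natDegree := by
  haveI : Fact p.Prime := ⟨hp⟩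
  haveI : Fact (Irreducible f) := ⟨hf⟩
  haveI : FiniteDimensional (ZMod p) (AdjoinRoot f) :=
    PowerBasis.finite (AdjoinRoot.powerBasis hf.ne_zero)
  have hfinrank : Module.finrank (ZMod p) (AdjoinRoot f) = f.natDegree :=
    (AdjoinRoot.powerBasis hf.ne_zero).finrank
  haveI : Fintype (AdjoinRoot f) :=
    Module.fintypeOfFintype (AdjoinRoot.powerBasis hf.ne_zero).basis
  have hcard : Fintype.card (AdjoinRoot f) = p ^ f.natDegree := by
    rw [Module.card_eq_pow_finrank (K := ZMod p) (V := AdjoinRoot f), ZMod.card, hfinrank]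
  have hαn : (AdjoinRoot.root f) ^ n = 1 := by
    have : (AdjoinRoot.mk f) (X ^ n - 1) = 0 := AdjoinRoot.mk_eq_zero.mpr hfdvd
    simpa [sub_eq_zero] using this
  have hαu : IsUnit (AdjoinRoot.root f) := by
    refine IsUnit.of_mul_eq_one ((AdjoinRoot.root f) ^ (n - 1)) ?_
    rw [← pow_succ', Nat.sub_add_cancel hn, hαn]
  obtain ⟨u, hu⟩ := hαu
  set d := orderOf (AdjoinRoot.root f) with hd
  have hdn : d ∣ n := orderOf_dvd_of_pow_eq_one hαn
  have hdpm : d ∣ p ^ f.natDegree - 1 := by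
    have h' : orderOf u ∣ Fintype.card (AdjoinRoot f)ˣ := orderOf_dvd_card
    rw [Fintype.card_units, hcard] at h'
    rwa [hd, ← hu, orderOf_units]
  -- d > 2
  have hd1 : d ≠ 1 := by
    intro h
    have hone : (AdjoinRoot.root f) = 1 := orderOf_eq_one_iff.mp (hd ▸ h)
    have hz : (AdjoinRoot.mk f) (X - 1) = 0 := by
      simpa [sub_eq_zero] using hone
    have : f ∣ X - 1 := AdjoinRoot.mk_eq_zero.mp hz
    exact h1 (hf.associated_of_dvd (by simpa using irreducible_X_sub_C (1 : ZMod p)) this)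
  have hd2 : d ≠ 2 := by
    intro h
    have hα2 : (AdjoinRoot.root f) ^ 2 = 1 := by rw [← h, hd, pow_orderOf_eq_one]
    have hfac : ((AdjoinRoot.root f) - 1) * ((AdjoinRoot.root f) + 1) = 0 := by
      linear_combination hα2
    rcases mul_eq_zero.mp hfac with h' | h'
    · have hone : (AdjoinRoot.root f) = 1 := sub_eq_zero.mp h'
      have : d = 1 := by rw [hd, hone, orderOf_one]
      exact hd1 this
    · have hz : (AdjoinRoot.mk f) (X + 1) = 0 := by simpa using h'
      have : f ∣ X + 1 := AdjoinRoot.mk_eq_zero.mp hz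
      have hirr : Irreducible (X + 1 : Polynomial (ZMod p)) := by
        simpa [sub_neg_eq_add] using irreducible_X_sub_C (-1 : ZMod p)
      exact h2 (hf.associated_of_dvd hirr this)
  have hdpos : 0 < d := by
    rw [hd, ← hu, orderOf_units]
    exact orderOf_pos u
  -- facts mod d
  have hdle : ¬ d ∣ 2 := by
    intro h
    have := Nat.le_of_dvd two_pos h
    omega
  have hdt : d ∣ p ^ t + 1 := hdn.trans hdvd
  have hpt : (p : ZMod d) ^ t = -1 := by
    have h0 : ((p ^ t + 1 : ℕ) : ZMod d) = 0 := (ZMod.natCast_eq_zero_iff _ _).mpr hdt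
    push_cast at h0
    linear_combination h0
  have he2t : orderOf ((p : ZMod d)) ∣ 2 * t := by
    apply orderOf_dvd_of_pow_eq_one
    rw [pow_mul', hpt]; ring
  have heeven : 2 ∣ orderOf ((p : ZMod d)) := by
    by_contra hodd
    have hcop : Nat.Coprime (orderOf ((p : ZMod d))) 2 :=
      Nat.coprime_two_right.mpr (Nat.odd_iff.mpr (by omega))
    have het : orderOf ((p : ZMod d)) ∣ t := (Nat.Coprime.dvd_of_dvd_mul_left hcop he2t)
    have h1' : (p : ZMod d) ^ t = 1 := orderOf_dvd_iff_pow_eq_one.mp het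
    rw [hpt] at h1'
    have h2z : ((2 : ℕ) : ZMod d) = 0 := by push_cast; linear_combination -h1'
    exact hdle ((ZMod.natCast_eq_zero_iff _ _).mp h2z)
  have hem : orderOf ((p : ZMod d)) ∣ f.natDegree := by
    apply orderOf_dvd_of_pow_eq_one
    have hge : 1 ≤ p ^ f.natDegree := Nat.one_le_pow _ _ hp.pos
    have h0 : ((p ^ f.natDegree - 1 : ℕ) : ZMod d) = 0 :=
      (ZMod.natCast_eq_zero_iff _ _).mpr hdpm
    rw [Nat.cast_sub hge] at h0
    push_cast at h0
    linear_combination h0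
  exact even_iff_two_dvd.mpr (heeven.trans hem)
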